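/- Let C : Fin n → Fin n → Fin n → ℝ be coefficients with C^δ_{μν} = −C^δ_{νμ}, and define functions π_{μν}(z) = Σ_δ C^δ_{μν} · log z_δ on (0,∞)ⁿ. Then the Jacobi-type identity Σ_{μ,ν} [(C^μ_{ρδ} C^ν_{δγ} + C^μ_{ργ} C^ν_{δγ}) log z_μ log z_ν + C^μ_{ρν} C^ν_{δγ} log z_μ] + c.p.(ρ,δ,γ) = 0 holds for all z ∈ (0,∞)ⁿ and all ρ,δ,γ if and only if the C^μ_{ρδ} satisfy the Jacobi identity Σ_ν (C^μ_{ρν} C^ν_{δγ} + C^μ_{δν} C^ν_{γρ} + C^μ_{γν} C^ν_{ρδ}) = 0 for all μ, ρ, δ, γ, i.e. iff the C's are structure constants of an n-dimensional Lie algebra. -/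
import Mathlib


open Real

private lemma sum_antisymm_eq_zero {n : ℕ} (S : Fin n → Fin n → ℝ)
    (h : ∀ μ ν, S μ ν = - S ν μ) : ∑ μ, ∑ ν, S μ ν = 0 := by
  have h1 : ∑ μ, ∑ ν, S μ ν = ∑ ν, ∑ μ, S μ ν := Finset.sum_comm
  have h2 : ∑ ν, ∑ μ, S μ ν = - ∑ μ, ∑ ν, S μ ν := by
    rw [← Finset.sum_neg_distrib]
    refine Finset.sum_congr rfl fun ν _ => ?_
    rw [← Finset.sum_neg_distrib]
    exact Finset.sum_congr rfl fun μ _ => h μ ν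
  linarith [h1, h2]

private lemma key_identity {n : ℕ} (C : Fin n → Fin n → Fin n → ℝ)
    (hskew : ∀ δ μ ν, C δ μ ν = - C δ ν μ) (L : Fin n → ℝ) (ρ δ γ : Fin n) :
    (∑ μ, ∑ ν,
        ((C μ ρ δ * C ν δ γ + C μ ρ γ * C ν δ γ) * L μ * L ν
          + C μ ρ ν * C ν δ γ * L μ))
      + (∑ μ, ∑ ν,
        ((C μ δ γ * C ν γ ρ + C μ δ ρ * C ν γ ρ) * L μ * L ν
          + C μ δ ν * C ν γ ρ * L μ))
      + (∑ μ, ∑ ν,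
        ((C μ γ ρ * C ν ρ δ + C μ γ δ * C ν ρ δ) * L μ * L ν
          + C μ γ ν * C ν ρ δ * L μ))
    = ∑ μ, L μ * ∑ ν, (C μ ρ ν * C ν δ γ + C μ δ ν * C ν γ ρ + C μ γ ν * C ν ρ δ) := by
  have hq : ∑ μ, ∑ ν,
      ((C μ ρ δ * C ν δ γ + C μ ρ γ * C ν δ γ) * L μ * L ν
        + (C μ δ γ * C ν γ ρ + C μ δ ρ * C ν γ ρ) * L μ * L ν
        + (C μ γ ρ * C ν ρ δ + C μ γ δ * C ν ρ δ) * L μ * L ν) = 0 := by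
    apply sum_antisymm_eq_zero
    intro μ ν
    simp only [show ∀ x, C x ρ γ = - C x γ ρ from fun x => hskew x ρ γ,
      show ∀ x, C x δ ρ = - C x ρ δ from fun x => hskew x δ ρ,
      show ∀ x, C x γ δ = - C x δ γ from fun x => hskew x γ δ]
    ring
  calc
    _ = (∑ μ, ∑ ν,
        ((C μ ρ δ * C ν δ γ + C μ ρ γ * C ν δ γ) * L μ * L ν
          + (C μ δ γ * C ν γ ρ + C μ δ ρ * C ν γ ρ) * L μ * L ν
          + (C μ γ ρ * C ν ρ δ + C μ γ δ * C ν ρ δ) * L μ * L ν))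
        + ∑ μ, ∑ ν, (C μ ρ ν * C ν δ γ + C μ δ ν * C ν γ ρ + C μ γ ν * C ν ρ δ) * L μ := by
      simp only [← Finset.sum_add_distrib]
      refine Finset.sum_congr rfl fun μ _ => Finset.sum_congr rfl fun ν _ => by ring
    _ = ∑ μ, L μ * ∑ ν, (C μ ρ ν * C ν δ γ + C μ δ ν * C ν γ ρ + C μ γ ν * C ν ρ δ) := by
      rw [hq, zero_add]
      refine Finset.sum_congr rfl fun μ _ => ?_
      rw [Finset.mul_sum]
      exact Finset.sum_congr rfl fun ν _ => by ring

/-- Classification of Poisson Lie structures on `(ℝ₊)ⁿ`: for antisymmetric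
coefficients `C^δ_{μν}` (written `C δ μ ν`), the Jacobi-type identity (3.3) for
`π_{μν}(z) = Σ_δ C^δ_{μν} log z_δ`, summed over the cyclic permutations of
`(ρ,δ,γ)`, holds for all `z ∈ (0,∞)ⁿ` iff the `C`'s satisfy the Jacobi identity
(3.4), i.e. are structure constants of an `n`-dimensional Lie algebra. -/
theorem poisson_lie_on_positive_reals_iff_jacobi
    {n : ℕ} (C : Fin n → Fin n → Fin n → ℝ)
    (hskew : ∀ δ μ ν, C δ μ ν = - C δ ν μ) :
    (∀ z : Fin n → ℝ, (∀ i, 0 < z i) → ∀ ρ δ γ : Fin n,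
      (∑ μ, ∑ ν,
        ((C μ ρ δ * C ν δ γ + C μ ρ γ * C ν δ γ) * log (z μ) * log (z ν)
          + C μ ρ ν * C ν δ γ * log (z μ)))
      + (∑ μ, ∑ ν,
        ((C μ δ γ * C ν γ ρ + C μ δ ρ * C ν γ ρ) * log (z μ) * log (z ν)
          + C μ δ ν * C ν γ ρ * log (z μ)))
      + (∑ μ, ∑ ν,
        ((C μ γ ρ * C ν ρ δ + C μ γ δ * C ν ρ δ) * log (z μ) * log (z ν)
          + C μ γ ν * C ν ρ δ * log (z μ))) = 0)
    ↔ (∀ μ ρ δ γ : Fin n,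
        ∑ ν, (C μ ρ ν * C ν δ γ + C μ δ ν * C ν γ ρ + C μ γ ν * C ν ρ δ) = 0) := by
  constructor
  · intro h μ₀ ρ δ γ
    set z : Fin n → ℝ := fun i => if i = μ₀ then Real.exp 1 else 1 with hz
    have hpos : ∀ i, 0 < z i := by
      intro i; by_cases hi : i = μ₀ <;> simp [hz, hi, Real.exp_pos]
    have h' := h z hpos ρ δ γ
    rw [key_identity C hskew _ ρ δ γ] at h'
    have hlog : ∀ i, log (z i) = if i = μ₀ then 1 else 0 := by
      intro i; by_cases hi : i = μ₀ <;> simp [hz, hi, Real.log_exp]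
    simp only [hlog, ite_mul, one_mul, zero_mul, Finset.sum_ite_eq',
      Finset.mem_univ, if_true] at h'
    exact h'
  · intro h z hz ρ δ γ
    rw [key_identity C hskew _ ρ δ γ]
    simp [h]
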